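/- Let g : ℝ^d → [0,∞) be symmetric decreasing but not strictly decreasing, so that g is constant on an annulus B_R \ B_r with 0 ≤ r < R. Choose δ > 0 with r + 2δ < R − 4δ and set Ω = {x : |x| < r+2δ} ∪ {x : R−4δ < |x| < R−2δ}, f = χ_Ω, h = χ_{B_δ}. Then equality holds in Riesz' rearrangement inequality: ∫∫ f(x) g(x−y) h(y) dx dy = ∫∫ f*(x) g(x−y) h*(y) dx dy, even though f is not a.e. equal to a translate of a symmetric decreasing function. -/

import Mathlib

open MeasureTheory

/-- The centered open ball with the same measure as `Ω`. -/
def setRearrangement {n : ℕ} (Ω : Set (EuclideanSpace ℝ (Fin n))) :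
    Set (EuclideanSpace ℝ (Fin n)) :=
  {x | volume (Metric.ball (0 : EuclideanSpace ℝ (Fin n)) ‖x‖) < volume Ω}

/-- The symmetric decreasing rearrangement of a nonnegative function (layer cake). -/
noncomputable def symmDecrRearrangement {n : ℕ} (f : EuclideanSpace ℝ (Fin n) → ℝ)
    (x : EuclideanSpace ℝ (Fin n)) : ℝ :=
  ∫ t in Set.Ioi (0 : ℝ),
    (setRearrangement {y | t < |f y|}).indicator (fun _ => (1 : ℝ)) x

open Metric Set

section Aux

variable {d : ℕ}

local notation "𝔼" => EuclideanSpace ℝ (Fin d)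


lemma vol_ball_eq (hd : 0 < d) {t : ℝ} (ht : 0 ≤ t) :
    volume (ball (0 : EuclideanSpace ℝ (Fin d)) t)
      = ENNReal.ofReal (t ^ d) * volume (ball (0 : EuclideanSpace ℝ (Fin d)) 1) := by
  have : Nontrivial (EuclideanSpace ℝ (Fin d)) := by
    refine ⟨⟨EuclideanSpace.single ⟨0, hd⟩ (1 : ℝ), 0, fun hcon => ?_⟩⟩
    have := congrArg norm hcon
    simp [EuclideanSpace.norm_single] at this
  simpa [finrank_euclideanSpace_fin] using
    Measure.addHaar_ball (volume : Measure (EuclideanSpace ℝ (Fin d))) 0 ht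

lemma vol_cball_eq (hd : 0 < d) {t : ℝ} (ht : 0 ≤ t) :
    volume (closedBall (0 : EuclideanSpace ℝ (Fin d)) t)
      = ENNReal.ofReal (t ^ d) * volume (ball (0 : EuclideanSpace ℝ (Fin d)) 1) := by
  simpa [finrank_euclideanSpace_fin] using
    Measure.addHaar_closedBall (volume : Measure (EuclideanSpace ℝ (Fin d))) 0 ht

lemma vol_ball_lt_iff (hd : 0 < d) {a b : ℝ} (ha : 0 ≤ a) (hb : 0 ≤ b) :
    volume (ball (0 : EuclideanSpace ℝ (Fin d)) a)
      < volume (ball (0 : EuclideanSpace ℝ (Fin d)) b) ↔ a < b := by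
  rw [vol_ball_eq hd ha, vol_ball_eq hd hb]
  rw [ENNReal.mul_lt_mul_iff_left (measure_ball_pos volume _ one_pos).ne'
    measure_ball_lt_top.ne]
  rw [ENNReal.ofReal_lt_ofReal_iff_of_nonneg (pow_nonneg ha d)]
  exact pow_lt_pow_iff_left₀ ha hb hd.ne'

lemma rearr_eq_ball (hd : 0 < d) {A : Set (EuclideanSpace ℝ (Fin d))} {s : ℝ} (hs : 0 ≤ s)
    (hvol : volume A = volume (ball (0 : EuclideanSpace ℝ (Fin d)) s)) :
    setRearrangement A = ball (0 : EuclideanSpace ℝ (Fin d)) s := by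
  ext x
  simp only [setRearrangement, mem_setOf_eq, mem_ball_zero_iff, hvol]
  exact vol_ball_lt_iff hd (norm_nonneg x) hs

lemma symm_of_indicator (A : Set (EuclideanSpace ℝ (Fin d))) :
    symmDecrRearrangement (A.indicator fun _ => (1 : ℝ))
      = (setRearrangement A).indicator fun _ => (1 : ℝ) := by
  funext x
  unfold symmDecrRearrangement
  have key : ∀ t ∈ Ioi (0 : ℝ),
      (setRearrangement {y | t < |A.indicator (fun _ => (1 : ℝ)) y|}).indicator
          (fun _ => (1 : ℝ)) x
        = (Iio (1 : ℝ)).indicator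
            (fun _ => (setRearrangement A).indicator (fun _ => (1 : ℝ)) x) t := by
    intro t ht
    simp only [mem_Ioi] at ht
    by_cases h1 : t < 1
    · have hset : {y | t < |A.indicator (fun _ => (1 : ℝ)) y|} = A := by
        ext y
        by_cases hy : y ∈ A <;> simp [indicator, hy, h1, not_lt.2 ht.le]
      have h1' : t ∈ Iio (1 : ℝ) := h1
      rw [hset, Set.indicator_of_mem h1']
    · have hset : {y | t < |A.indicator (fun _ => (1 : ℝ)) y|} = (∅ : Set _) := by
        ext y
        by_cases hy : y ∈ A <;>
          simp [indicator, hy, not_lt.2 (le_of_not_gt h1), not_lt.2 ht.le]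
      have hre : setRearrangement (∅ : Set (EuclideanSpace ℝ (Fin d))) = ∅ := by
        ext z; simp [setRearrangement]
      have h1' : t ∉ Iio (1 : ℝ) := by simpa using h1
      rw [hset, hre, Set.indicator_of_notMem h1']
      simp
  rw [setIntegral_congr_fun measurableSet_Ioi key, setIntegral_indicator measurableSet_Iio]
  rw [Ioi_inter_Iio]
  rw [setIntegral_const]
  simp [Real.volume_Ioo]

lemma core_formula (g₁ : ℝ → ℝ) (hg : Antitone g₁) (hg0 : ∀ t, 0 ≤ g₁ t)
    (r R δ cst : ℝ)
    (hcst : ∀ t, r ≤ t → t < R → g₁ t = cst)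
    (A : Set 𝔼) (hAm : MeasurableSet A)
    (hA1 : ball (0 : 𝔼) (r + δ) ⊆ A)
    (hA2 : A ⊆ ball (0 : 𝔼) (R - δ)) :
    (∫ x, ∫ y, A.indicator (fun _ => (1 : ℝ)) x * g₁ ‖x - y‖
        * (ball (0 : 𝔼) δ).indicator (fun _ => (1 : ℝ)) y)
      = (∫ z in ball (0 : 𝔼) r, g₁ ‖z‖) * (volume (ball (0 : 𝔼) δ)).toReal
        + cst * ((volume A).toReal * (volume (ball (0 : 𝔼) δ)).toReal
            - (volume (ball (0 : 𝔼) r)).toReal * (volume (ball (0 : 𝔼) δ)).toReal) := by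
  set χA : 𝔼 → ℝ := A.indicator (fun _ => (1 : ℝ)) with hχA
  set χδ : 𝔼 → ℝ := (ball (0 : 𝔼) δ).indicator (fun _ => (1 : ℝ)) with hχδ
  set volδ : ℝ := (volume (ball (0 : 𝔼) δ)).toReal with hvolδ
  have hχAm : Measurable χA := measurable_const.indicator hAm
  have hχδm : Measurable χδ := measurable_const.indicator measurableSet_ball
  have hgm : Measurable g₁ := hg.measurable
  have hχA0 : ∀ x, 0 ≤ χA x := fun x => Set.indicator_nonneg (fun _ _ => zero_le_one) x
  have hχδ0 : ∀ x, 0 ≤ χδ x := fun x => Set.indicator_nonneg (fun _ _ => zero_le_one) x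
  have hχA1 : ∀ x, χA x ≤ 1 := fun x => by
    by_cases hx : x ∈ A <;> simp [hχA, indicator, hx]
  have hχδ1 : ∀ x, χδ x ≤ 1 := fun x => by
    by_cases hx : x ∈ ball (0 : 𝔼) δ <;> simp [hχδ, indicator, hx]
  have hAfin : volume A < ⊤ :=
    lt_of_le_of_lt (measure_mono hA2) measure_ball_lt_top
  -- integrability of the key product-space functions
  have key_int : ∀ (φ : 𝔼 → ℝ) (M : ℝ), Measurable φ → (∀ t, 0 ≤ φ t) → (∀ t, φ t ≤ M) →
      Integrable (fun p : 𝔼 × 𝔼 => χA p.1 * φ p.2 * χδ (p.1 - p.2))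
        (volume.prod volume) := by
    intro φ M hφm hφ0 hφM
    have hmeas : Measurable (fun p : 𝔼 × 𝔼 => χA p.1 * φ p.2 * χδ (p.1 - p.2)) :=
      ((hχAm.comp measurable_fst).mul (hφm.comp measurable_snd)).mul
        (hχδm.comp (measurable_fst.sub measurable_snd))
    have hbd_int : Integrable ((A ×ˢ ball (0 : 𝔼) R).indicator fun _ => M)
        (volume.prod volume) := by
      rw [integrable_indicator_iff (hAm.prod measurableSet_ball)]
      refine integrableOn_const ?_
      rw [Measure.prod_prod]
      exact (ENNReal.mul_lt_top hAfin measure_ball_lt_top).ne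
    refine hbd_int.mono' hmeas.aestronglyMeasurable (Filter.Eventually.of_forall fun p => ?_)
    by_cases hp : p ∈ A ×ˢ ball (0 : 𝔼) R
    · rw [Set.indicator_of_mem hp, Real.norm_eq_abs,
        abs_of_nonneg (mul_nonneg (mul_nonneg (hχA0 _) (hφ0 _)) (hχδ0 _))]
      calc χA p.1 * φ p.2 * χδ (p.1 - p.2) ≤ χA p.1 * φ p.2 * 1 :=
            mul_le_mul_of_nonneg_left (hχδ1 _) (mul_nonneg (hχA0 _) (hφ0 _))
        _ = χA p.1 * φ p.2 := mul_one _
        _ ≤ 1 * φ p.2 := mul_le_mul_of_nonneg_right (hχA1 _) (hφ0 _)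
        _ = φ p.2 := one_mul _
        _ ≤ M := hφM _
    · rw [Set.indicator_of_notMem hp]
      have hz : χA p.1 * φ p.2 * χδ (p.1 - p.2) = 0 := by
        rw [Set.mem_prod] at hp
        push_neg at hp
        by_cases h1 : p.1 ∈ A
        · have h2 : p.2 ∉ ball (0 : 𝔼) R := hp h1
          have : χδ (p.1 - p.2) = 0 := by
            apply Set.indicator_of_notMem
            intro hmem
            apply h2
            rw [mem_ball_zero_iff] at hmem ⊢
            have h1' : ‖p.1‖ < R - δ := mem_ball_zero_iff.1 (hA2 h1)
            calc ‖p.2‖ = ‖p.1 - (p.1 - p.2)‖ := by rw [sub_sub_cancel]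
              _ ≤ ‖p.1‖ + ‖p.1 - p.2‖ := norm_sub_le _ _
              _ < (R - δ) + δ := add_lt_add h1' hmem
              _ = R := by ring
          rw [this, mul_zero]
        · have : χA p.1 = 0 := Set.indicator_of_notMem h1 _
          rw [this, zero_mul, zero_mul]
      rw [hz]; simp
  have hPint : Integrable (fun p : 𝔼 × 𝔼 => χA p.1 * g₁ ‖p.2‖ * χδ (p.1 - p.2))
      (volume.prod volume) :=
    key_int (fun z => g₁ ‖z‖) (g₁ 0) (hgm.comp measurable_norm) (fun t => hg0 _)
      (fun t => hg (norm_nonneg t))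
  have hQint : Integrable (fun p : 𝔼 × 𝔼 => χA p.1 * χδ (p.1 - p.2))
      (volume.prod volume) := by
    have := key_int (fun _ => 1) 1 measurable_const (fun _ => zero_le_one) (fun _ => le_refl 1)
    simpa using this
  set F : 𝔼 → ℝ := fun z => ∫ x, χA x * χδ (x - z) with hF
  have hFint : Integrable F := by
    have := hQint.integral_prod_right
    exact this
  -- translation invariance helpers
  have htransR : ∀ w : 𝔼, (∫ x, χδ (x - w)) = volδ := by
    intro w
    rw [integral_sub_right_eq_self χδ w, hχδ, integral_indicator measurableSet_ball,
      setIntegral_const, smul_eq_mul, mul_one, measureReal_def]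
  have htransL : ∀ x : 𝔼, (∫ z, χδ (x - z)) = volδ := by
    intro x
    rw [integral_sub_left_eq_self χδ volume x, hχδ, integral_indicator measurableSet_ball,
      setIntegral_const, smul_eq_mul, mul_one, measureReal_def]
  -- pointwise values of F
  have hFz : ∀ z : 𝔼, ‖z‖ ≤ r → F z = volδ := by
    intro z hz
    have hpt : ∀ x, χA x * χδ (x - z) = χδ (x - z) := by
      intro x
      by_cases hx : x - z ∈ ball (0 : 𝔼) δ
      · have hxA : x ∈ A := by
          apply hA1
          rw [mem_ball_zero_iff] at hx ⊢
          calc ‖x‖ = ‖(x - z) + z‖ := by congr 1; abel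
            _ ≤ ‖x - z‖ + ‖z‖ := norm_add_le _ _
            _ < δ + r := add_lt_add_of_lt_of_le hx hz
            _ = r + δ := by ring
        rw [hχA, Set.indicator_of_mem hxA, one_mul]
      · rw [hχδ, Set.indicator_of_notMem hx, mul_zero]
    rw [hF]
    simp only [hpt]
    exact htransR z
  have hFout : ∀ z : 𝔼, R ≤ ‖z‖ → F z = 0 := by
    intro z hz
    have hpt : ∀ x, χA x * χδ (x - z) = 0 := by
      intro x
      by_cases h1 : x ∈ A
      · have : χδ (x - z) = 0 := by
          apply Set.indicator_of_notMem
          intro hmem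
          rw [mem_ball_zero_iff] at hmem
          have h1' : ‖x‖ < R - δ := mem_ball_zero_iff.1 (hA2 h1)
          have : ‖z‖ < R := by
            calc ‖z‖ = ‖x - (x - z)‖ := by rw [sub_sub_cancel]
              _ ≤ ‖x‖ + ‖x - z‖ := norm_sub_le _ _
              _ < (R - δ) + δ := add_lt_add h1' hmem
              _ = R := by ring
          exact absurd hz (not_le.2 this)
        rw [this, mul_zero]
      · rw [hχA, Set.indicator_of_notMem h1, zero_mul]
    rw [hF]
    simp only [hpt, integral_zero]
  -- total integral of F
  have hFtot : (∫ z, F z) = (volume A).toReal * volδ := by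
    have hswap := integral_integral_swap
      (f := fun x z => χA x * χδ (x - z)) (μ := (volume : Measure 𝔼))
      (ν := (volume : Measure 𝔼)) hQint
    calc (∫ z, F z) = ∫ z, ∫ x, χA x * χδ (x - z) := rfl
      _ = ∫ x, ∫ z, χA x * χδ (x - z) := hswap.symm
      _ = ∫ x, χA x * volδ := by
          apply integral_congr_ae
          apply Filter.Eventually.of_forall
          intro x
          show (∫ z, χA x * χδ (x - z)) = χA x * volδ
          rw [integral_const_mul, htransL x]
      _ = (∫ x, χA x) * volδ := integral_mul_const _ _
      _ = (volume A).toReal * volδ := by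
          rw [hχA, integral_indicator hAm, setIntegral_const, smul_eq_mul, mul_one, measureReal_def]
  -- integral of F over the inner ball
  have hFball : (∫ z in ball (0 : 𝔼) r, F z) = (volume (ball (0 : 𝔼) r)).toReal * volδ := by
    rw [setIntegral_congr_fun measurableSet_ball
      (fun z hz => hFz z (le_of_lt (mem_ball_zero_iff.1 hz)))]
    rw [setIntegral_const, smul_eq_mul, measureReal_def]
  -- the function z ↦ g₁‖z‖ * F z and its integrability
  have hPF : ∀ z : 𝔼, (∫ x, χA x * g₁ ‖z‖ * χδ (x - z)) = g₁ ‖z‖ * F z := by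
    intro z
    calc (∫ x, χA x * g₁ ‖z‖ * χδ (x - z))
        = ∫ x, g₁ ‖z‖ * (χA x * χδ (x - z)) := by
          apply integral_congr_ae
          apply Filter.Eventually.of_forall
          intro x; ring
      _ = g₁ ‖z‖ * F z := integral_const_mul _ _
  have hGFint : Integrable (fun z => g₁ ‖z‖ * F z) := by
    have h := hPint.integral_prod_right
    exact h.congr (Filter.Eventually.of_forall hPF)
  -- main chain
  calc (∫ x, ∫ y, χA x * g₁ ‖x - y‖ * χδ y)
      = ∫ x, ∫ z, χA x * g₁ ‖z‖ * χδ (x - z) := by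
        apply integral_congr_ae
        apply Filter.Eventually.of_forall
        intro x
        show (∫ y, χA x * g₁ ‖x - y‖ * χδ y) = ∫ z, χA x * g₁ ‖z‖ * χδ (x - z)
        have hkey := integral_sub_left_eq_self
          (fun y => χA x * g₁ ‖x - y‖ * χδ y) volume x
        rw [← hkey]
        simp only [sub_sub_cancel]
    _ = ∫ z, ∫ x, χA x * g₁ ‖z‖ * χδ (x - z) :=
        integral_integral_swap (f := fun x z => χA x * g₁ ‖z‖ * χδ (x - z)) hPint
    _ = ∫ z, g₁ ‖z‖ * F z := integral_congr_ae (Filter.Eventually.of_forall hPF)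
    _ = (∫ z in ball (0 : 𝔼) r, g₁ ‖z‖ * F z)
          + ∫ z in (ball (0 : 𝔼) r)ᶜ, g₁ ‖z‖ * F z :=
        (integral_add_compl measurableSet_ball hGFint).symm
    _ = (∫ z in ball (0 : 𝔼) r, g₁ ‖z‖) * volδ
          + cst * ((volume A).toReal * volδ
              - (volume (ball (0 : 𝔼) r)).toReal * volδ) := by
        have hb : (∫ z in ball (0 : 𝔼) r, g₁ ‖z‖ * F z)
            = (∫ z in ball (0 : 𝔼) r, g₁ ‖z‖) * volδ := by
          rw [setIntegral_congr_fun measurableSet_ball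
            (fun z hz => by rw [hFz z (le_of_lt (mem_ball_zero_iff.1 hz))])]
          exact integral_mul_const _ _
        have hc : (∫ z in (ball (0 : 𝔼) r)ᶜ, g₁ ‖z‖ * F z)
            = cst * ((volume A).toReal * volδ
                - (volume (ball (0 : 𝔼) r)).toReal * volδ) := by
          have hcompl : (∫ z in (ball (0 : 𝔼) r)ᶜ, g₁ ‖z‖ * F z)
              = ∫ z in (ball (0 : 𝔼) r)ᶜ, cst * F z := by
            apply setIntegral_congr_fun measurableSet_ball.compl
            intro z hz
            show g₁ ‖z‖ * F z = cst * F z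
            have hzr : r ≤ ‖z‖ := by
              by_contra hcon
              exact hz (mem_ball_zero_iff.2 (lt_of_not_ge hcon))
            by_cases hzR : ‖z‖ < R
            · rw [hcst ‖z‖ hzr hzR]
            · rw [hFout z (le_of_not_gt hzR), mul_zero, mul_zero]
          have hsplit : (∫ z in (ball (0 : 𝔼) r)ᶜ, F z)
              = (∫ z, F z) - ∫ z in ball (0 : 𝔼) r, F z := by
            rw [← integral_add_compl measurableSet_ball hFint]
            ring
          rw [hcompl, integral_const_mul, hsplit, hFtot, hFball]
        rw [hb, hc]

end Aux
set_option maxHeartbeats 1000000 in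
theorem riesz_equality_without_strict_monotonicity
    (d : ℕ) (hd : 0 < d) (g₀ : ℝ → ℝ) (r R δ cst : ℝ)
    (hr : 0 ≤ r) (hrR : r < R) (hδ : 0 < δ) (hgap : r + 2 * δ < R - 4 * δ)
    (hg₀anti : AntitoneOn g₀ (Set.Ici 0))
    (hg₀nonneg : ∀ t, 0 ≤ g₀ t)
    (hconst : ∀ t : ℝ, r ≤ t → t < R → g₀ t = cst)
    (Ω : Set (EuclideanSpace ℝ (Fin d)))
    (hΩ : Ω = {x | ‖x‖ < r + 2 * δ} ∪ {x | R - 4 * δ < ‖x‖ ∧ ‖x‖ < R - 2 * δ})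
    (f h : EuclideanSpace ℝ (Fin d) → ℝ)
    (hf : f = Ω.indicator fun _ => (1 : ℝ))
    (hh : h = (Metric.ball (0 : EuclideanSpace ℝ (Fin d)) δ).indicator fun _ => (1 : ℝ)) :
    (∫ x, ∫ y, f x * g₀ ‖x - y‖ * h y)
        = ∫ x, ∫ y, symmDecrRearrangement f x * g₀ ‖x - y‖ * symmDecrRearrangement h y ∧
      ¬ ∃ y₀ : EuclideanSpace ℝ (Fin d),
          f =ᵐ[volume] fun x => symmDecrRearrangement f (x - y₀) := by
  classical
  have ha0 : 0 < r + 2 * δ := by linarith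
  have hc0 : 0 < R - 4 * δ := by linarith
  have hb0 : 0 < R - 2 * δ := by linarith
  have hcb : R - 4 * δ < R - 2 * δ := by linarith
  set κ := volume (ball (0 : EuclideanSpace ℝ (Fin d)) 1) with hκ
  -- volume of Ω
  have hshellm : MeasurableSet {x : EuclideanSpace ℝ (Fin d) | R - 4 * δ < ‖x‖ ∧ ‖x‖ < R - 2 * δ} := by
    have : {x : EuclideanSpace ℝ (Fin d) | R - 4 * δ < ‖x‖ ∧ ‖x‖ < R - 2 * δ}
        = ball (0 : EuclideanSpace ℝ (Fin d)) (R - 2 * δ)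
            \ closedBall (0 : EuclideanSpace ℝ (Fin d)) (R - 4 * δ) := by
      ext x
      simp only [mem_setOf_eq, mem_diff, mem_ball_zero_iff, mem_closedBall_zero_iff, not_le]
      tauto
    rw [this]
    exact measurableSet_ball.diff measurableSet_closedBall
  have hshell : volume {x : EuclideanSpace ℝ (Fin d) | R - 4 * δ < ‖x‖ ∧ ‖x‖ < R - 2 * δ}
      = ENNReal.ofReal ((R - 2 * δ) ^ d - (R - 4 * δ) ^ d) * κ := by
    have hset : {x : EuclideanSpace ℝ (Fin d) | R - 4 * δ < ‖x‖ ∧ ‖x‖ < R - 2 * δ}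
        = ball (0 : EuclideanSpace ℝ (Fin d)) (R - 2 * δ)
            \ closedBall (0 : EuclideanSpace ℝ (Fin d)) (R - 4 * δ) := by
      ext x
      simp only [mem_setOf_eq, mem_diff, mem_ball_zero_iff, mem_closedBall_zero_iff, not_le]
      tauto
    rw [hset, measure_diff (closedBall_subset_ball hcb)
      measurableSet_closedBall.nullMeasurableSet measure_closedBall_lt_top.ne,
      vol_ball_eq hd hb0.le, vol_cball_eq hd hc0.le,
      ENNReal.ofReal_sub _ (pow_nonneg hc0.le d), ENNReal.sub_mul]
    intro _ _
    exact measure_ball_lt_top.ne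
  set T : ℝ := (r + 2 * δ) ^ d + ((R - 2 * δ) ^ d - (R - 4 * δ) ^ d) with hTdef
  have hTgap : (R - 4 * δ) ^ d < (R - 2 * δ) ^ d :=
    pow_lt_pow_left₀ hcb hc0.le hd.ne'
  have hT0 : 0 < T := by
    have := pow_pos ha0 d
    simp only [hTdef]
    linarith
  have hΩvol' : volume Ω = ENNReal.ofReal T * κ := by
    rw [hΩ]
    have hdisj : Disjoint {x : EuclideanSpace ℝ (Fin d) | ‖x‖ < r + 2 * δ}
        {x : EuclideanSpace ℝ (Fin d) | R - 4 * δ < ‖x‖ ∧ ‖x‖ < R - 2 * δ} := by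
      rw [Set.disjoint_left]
      intro x hx1 hx2
      simp only [mem_setOf_eq] at hx1 hx2
      linarith [hx2.1]
    rw [measure_union hdisj hshellm,
      show {x : EuclideanSpace ℝ (Fin d) | ‖x‖ < r + 2 * δ}
          = ball (0 : EuclideanSpace ℝ (Fin d)) (r + 2 * δ) from
        (by ext x; simp [mem_ball_zero_iff]),
      vol_ball_eq hd ha0.le, hshell, ← add_mul,
      ← ENNReal.ofReal_add (pow_nonneg ha0.le d) (by linarith)]
  set s : ℝ := T ^ ((d : ℝ))⁻¹ with hsdef
  have hs0 : 0 ≤ s := Real.rpow_nonneg hT0.le _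
  have hsd : s ^ d = T := Real.rpow_inv_natCast_pow hT0.le hd.ne'
  have hs1 : r + 2 * δ < s := by
    have hpow : (r + 2 * δ) ^ d < s ^ d := by rw [hsd]; simp only [hTdef]; linarith
    exact lt_of_pow_lt_pow_left₀ d hs0 hpow
  have hs2 : s < R - 2 * δ := by
    have hpowgap : (r + 2 * δ) ^ d < (R - 4 * δ) ^ d :=
      pow_lt_pow_left₀ hgap ha0.le hd.ne'
    have hpow : s ^ d < (R - 2 * δ) ^ d := by rw [hsd]; simp only [hTdef]; linarith
    exact lt_of_pow_lt_pow_left₀ d hb0.le hpow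
  have hΩvol : volume Ω = volume (ball (0 : EuclideanSpace ℝ (Fin d)) s) := by
    rw [hΩvol', vol_ball_eq hd hs0, hsd]
  -- the rearrangements
  have hsymm_f : symmDecrRearrangement f
      = (ball (0 : EuclideanSpace ℝ (Fin d)) s).indicator (fun _ => (1 : ℝ)) := by
    rw [hf, symm_of_indicator, rearr_eq_ball hd hs0 hΩvol]
  have hsymm_h : symmDecrRearrangement h
      = (ball (0 : EuclideanSpace ℝ (Fin d)) δ).indicator (fun _ => (1 : ℝ)) := by
    rw [hh, symm_of_indicator, rearr_eq_ball hd hδ.le rfl]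
  -- the modified profile function
  set g₁ : ℝ → ℝ := fun t => g₀ (max t 0) with hg₁
  have hg₁anti : Antitone g₁ := by
    intro a b hab
    exact hg₀anti (le_max_right a 0) (le_max_right b 0) (max_le_max hab (le_refl 0))
  have hg₁0 : ∀ t, 0 ≤ g₁ t := fun t => hg₀nonneg _
  have hg₁cst : ∀ t, r ≤ t → t < R → g₁ t = cst := by
    intro t h1 h2
    rw [hg₁]
    simp only [max_eq_left (hr.trans h1)]
    exact hconst t h1 h2
  have hg₁norm : ∀ u : EuclideanSpace ℝ (Fin d), g₀ ‖u‖ = g₁ ‖u‖ := by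
    intro u
    rw [hg₁]
    simp [max_eq_left (norm_nonneg u)]
  have hgg : ∀ F G : EuclideanSpace ℝ (Fin d) → ℝ,
      (∫ x, ∫ y, F x * g₀ ‖x - y‖ * G y) = ∫ x, ∫ y, F x * g₁ ‖x - y‖ * G y := by
    intro F G
    apply integral_congr_ae
    apply Filter.Eventually.of_forall
    intro x
    show (∫ y, F x * g₀ ‖x - y‖ * G y) = ∫ y, F x * g₁ ‖x - y‖ * G y
    apply integral_congr_ae
    apply Filter.Eventually.of_forall
    intro y
    show F x * g₀ ‖x - y‖ * G y = F x * g₁ ‖x - y‖ * G y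
    rw [hg₁norm]
  -- domain inclusions
  have hΩm : MeasurableSet Ω := by
    rw [hΩ]
    refine MeasurableSet.union ?_ hshellm
    have : {x : EuclideanSpace ℝ (Fin d) | ‖x‖ < r + 2 * δ}
        = ball (0 : EuclideanSpace ℝ (Fin d)) (r + 2 * δ) := by
      ext x; simp [mem_ball_zero_iff]
    rw [this]; exact measurableSet_ball
  have hΩ1 : ball (0 : EuclideanSpace ℝ (Fin d)) (r + δ) ⊆ Ω := by
    intro x hx
    rw [hΩ]
    left
    have := mem_ball_zero_iff.1 hx
    simp only [mem_setOf_eq]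
    linarith
  have hΩ2 : Ω ⊆ ball (0 : EuclideanSpace ℝ (Fin d)) (R - δ) := by
    intro x hx
    rw [hΩ] at hx
    rw [mem_ball_zero_iff]
    rcases hx with hx | ⟨_, hx2⟩
    · simp only [mem_setOf_eq] at hx; linarith
    · linarith
  have hs1' : ball (0 : EuclideanSpace ℝ (Fin d)) (r + δ)
      ⊆ ball (0 : EuclideanSpace ℝ (Fin d)) s := ball_subset_ball (by linarith)
  have hs2' : ball (0 : EuclideanSpace ℝ (Fin d)) s
      ⊆ ball (0 : EuclideanSpace ℝ (Fin d)) (R - δ) := ball_subset_ball (by linarith)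
  constructor
  · -- equality of the two double integrals
    rw [hsymm_f, hsymm_h, hf, hh, hgg, hgg]
    rw [core_formula g₁ hg₁anti hg₁0 r R δ cst hg₁cst Ω hΩm hΩ1 hΩ2,
      core_formula g₁ hg₁anti hg₁0 r R δ cst hg₁cst
        (ball (0 : EuclideanSpace ℝ (Fin d)) s) measurableSet_ball hs1' hs2',
      hΩvol]
  · -- f is not a.e. a translate of its rearrangement
    rintro ⟨y₀, hae⟩
    rw [hsymm_f, hf] at hae
    have hlam : (fun x => (ball (0 : EuclideanSpace ℝ (Fin d)) s).indicator
        (fun _ => (1 : ℝ)) (x - y₀)) = (ball y₀ s).indicator (fun _ => (1 : ℝ)) := by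
      funext x
      by_cases hx : x ∈ ball y₀ s
      · rw [Set.indicator_of_mem hx, Set.indicator_of_mem]
        rw [mem_ball_zero_iff]
        exact mem_ball_iff_norm.1 hx
      · rw [Set.indicator_of_notMem hx, Set.indicator_of_notMem]
        intro hmem
        exact hx (mem_ball_iff_norm.2 (mem_ball_zero_iff.1 hmem))
    rw [hlam] at hae
    -- now derive a contradiction
    have hspos : 0 < s := lt_trans ha0 hs1
    set N := {x : EuclideanSpace ℝ (Fin d) | ¬ Ω.indicator (fun _ => (1 : ℝ)) x
        = (ball y₀ s).indicator (fun _ => (1 : ℝ)) x} with hNdef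
    have hN : volume N = 0 := ae_iff.1 hae
    have hΩopen : IsOpen Ω := by
      rw [hΩ]
      exact (isOpen_lt continuous_norm continuous_const).union
        ((isOpen_lt continuous_const continuous_norm).inter
          (isOpen_lt continuous_norm continuous_const))
    have hΩsub : Ω ⊆ closedBall y₀ s := by
      intro x hx
      by_contra hx'
      have hVopen : IsOpen (Ω ∩ (closedBall y₀ s)ᶜ) :=
        hΩopen.inter Metric.isClosed_closedBall.isOpen_compl
      have hVN : Ω ∩ (closedBall y₀ s)ᶜ ⊆ N := by
        rintro z ⟨hz1, hz2⟩
        simp only [hNdef, mem_setOf_eq]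
        rw [indicator_of_mem hz1,
          indicator_of_notMem (fun hball => hz2 (ball_subset_closedBall hball))]
        exact one_ne_zero
      have hpos := hVopen.measure_pos volume ⟨x, hx, hx'⟩
      have hle : volume (Ω ∩ (closedBall y₀ s)ᶜ) ≤ 0 := hN ▸ measure_mono hVN
      exact absurd hle (not_le.2 hpos)
    have hballgap : ∀ x : EuclideanSpace ℝ (Fin d),
        x ∈ ball y₀ s → r + 2 * δ < ‖x‖ → ‖x‖ < R - 4 * δ → False := by
      intro x hx h1 h2
      set U := ball y₀ s ∩ ({x : EuclideanSpace ℝ (Fin d) | r + 2 * δ < ‖x‖}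
          ∩ {x : EuclideanSpace ℝ (Fin d) | ‖x‖ < R - 4 * δ}) with hU
      have hUopen : IsOpen U :=
        isOpen_ball.inter ((isOpen_lt continuous_const continuous_norm).inter
          (isOpen_lt continuous_norm continuous_const))
      have hUN : U ⊆ N := by
        rintro z ⟨hz1, hz2, hz3⟩
        simp only [mem_setOf_eq] at hz2 hz3
        have hzΩ : z ∉ Ω := by
          rw [hΩ]
          rintro (hz | ⟨_, hz'⟩)
          · simp only [mem_setOf_eq] at hz; linarith
          · linarith
        simp only [hNdef, mem_setOf_eq]
        rw [indicator_of_notMem hzΩ, indicator_of_mem hz1]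
        exact zero_ne_one
      have hpos := hUopen.measure_pos volume ⟨x, hx, h1, h2⟩
      have hle : volume U ≤ 0 := hN ▸ measure_mono hUN
      exact absurd hle (not_le.2 hpos)
    have h0Ω : (0 : EuclideanSpace ℝ (Fin d)) ∈ Ω := by
      rw [hΩ]; left; simp only [mem_setOf_eq, norm_zero]; linarith
    have h0cb : (0 : EuclideanSpace ℝ (Fin d)) ∈ closedBall y₀ s := hΩsub h0Ω
    have hb3 : 0 < R - 3 * δ := by linarith
    set e : EuclideanSpace ℝ (Fin d) :=
      EuclideanSpace.single (⟨0, hd⟩ : Fin d) (1 : ℝ) with he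
    have henorm : ‖e‖ = 1 := by rw [he, EuclideanSpace.norm_single]; norm_num
    set b : EuclideanSpace ℝ (Fin d) := (R - 3 * δ) • e with hb
    have hbnorm : ‖b‖ = R - 3 * δ := by
      rw [hb, norm_smul, henorm, mul_one, Real.norm_eq_abs, abs_of_pos hb3]
    have hbΩ : b ∈ Ω := by
      rw [hΩ]; right
      constructor <;> rw [hbnorm] <;> linarith
    have hbcb : b ∈ closedBall y₀ s := hΩsub hbΩ
    set m : ℝ := (r + 2 * δ + (R - 4 * δ)) / 2 with hm
    have hm1 : r + 2 * δ < m := by rw [hm]; linarith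
    have hm2 : m < R - 4 * δ := by rw [hm]; linarith
    have hm0 : 0 < m := lt_trans ha0 hm1
    set t : ℝ := m / (R - 3 * δ) with ht
    have ht0 : 0 < t := div_pos hm0 hb3
    have ht1 : t < 1 := (div_lt_one hb3).2 (by linarith)
    set cpt : EuclideanSpace ℝ (Fin d) := t • b with hcpt
    have hcnorm : ‖cpt‖ = m := by
      rw [hcpt, norm_smul, hbnorm, Real.norm_eq_abs, abs_of_pos ht0, ht,
        div_mul_cancel₀ _ hb3.ne']
    have hccb : cpt ∈ closedBall y₀ s := by
      have hconv := (convex_closedBall y₀ s) hbcb h0cb ht0.le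
        (by linarith : (0 : ℝ) ≤ 1 - t) (by ring)
      simpa [hcpt] using hconv
    have hcd : ‖cpt - y₀‖ ≤ s := by
      rw [← dist_eq_norm]; exact mem_closedBall.1 hccb
    set η : ℝ := min (m - (r + 2 * δ)) ((R - 4 * δ) - m) with hη
    have hη0 : 0 < η := lt_min (by linarith) (by linarith)
    have hη1 : η ≤ m - (r + 2 * δ) := min_le_left _ _
    have hη2 : η ≤ (R - 4 * δ) - m := min_le_right _ _
    set θ : ℝ := min (η / (2 * s)) (1 / 2) with hθ
    have hθ0 : 0 < θ := lt_min (div_pos hη0 (by linarith)) (by norm_num)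
    have hθ1 : θ < 1 := lt_of_le_of_lt (min_le_right _ _) (by norm_num)
    have hθs : θ * s ≤ η / 2 := by
      have h1 : θ ≤ η / (2 * s) := min_le_left _ _
      have h2 : θ * s ≤ (η / (2 * s)) * s := mul_le_mul_of_nonneg_right h1 hspos.le
      calc θ * s ≤ (η / (2 * s)) * s := h2
        _ = η / 2 := by field_simp
    set c' : EuclideanSpace ℝ (Fin d) := cpt + θ • (y₀ - cpt) with hc'
    have hc'y : c' - y₀ = (1 - θ) • (cpt - y₀) := by
      rw [hc']; module
    have hc'ball : c' ∈ ball y₀ s := by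
      rw [mem_ball, dist_eq_norm, hc'y, norm_smul, Real.norm_eq_abs,
        abs_of_pos (by linarith : (0 : ℝ) < 1 - θ)]
      calc (1 - θ) * ‖cpt - y₀‖ ≤ (1 - θ) * s :=
            mul_le_mul_of_nonneg_left hcd (by linarith)
        _ < s := by nlinarith [mul_pos hθ0 hspos]
    have hc'cpt : ‖c' - cpt‖ ≤ θ * s := by
      have heq : c' - cpt = θ • (y₀ - cpt) := by rw [hc']; module
      rw [heq, norm_smul, Real.norm_eq_abs, abs_of_pos hθ0]
      have heq2 : ‖y₀ - cpt‖ = ‖cpt - y₀‖ := norm_sub_rev _ _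
      rw [heq2]
      exact mul_le_mul_of_nonneg_left hcd hθ0.le
    have hup : ‖c'‖ ≤ m + θ * s := by
      calc ‖c'‖ = ‖cpt + (c' - cpt)‖ := by congr 1; abel
        _ ≤ ‖cpt‖ + ‖c' - cpt‖ := norm_add_le _ _
        _ ≤ m + θ * s := by rw [hcnorm]; linarith
    have hlow : m - θ * s ≤ ‖c'‖ := by
      have h1 : ‖cpt‖ ≤ ‖c'‖ + ‖cpt - c'‖ := by
        calc ‖cpt‖ = ‖c' + (cpt - c')‖ := by congr 1; abel
          _ ≤ ‖c'‖ + ‖cpt - c'‖ := norm_add_le _ _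
      have h2 : ‖cpt - c'‖ = ‖c' - cpt‖ := norm_sub_rev _ _
      rw [hcnorm] at h1
      linarith [hc'cpt, h1, h2.ge, h2.le]
    exact hballgap c' hc'ball (by linarith) (by linarith)
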